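/- Every game G over L5 that has mean C for some integer C is monotone. -/

import Mathlib

universe u

/-- `SetTheory.PGame` (removed from Mathlib), restored with its old definition. -/
inductive SetTheory.PGame : Type (u + 1)
  | mk : ∀ α β : Type u, (α → SetTheory.PGame) → (β → SetTheory.PGame) → SetTheory.PGame

/-- The zero game `{ | }`, as in the old Mathlib. -/
instance SetTheory.PGame.instZeroPGame : Zero SetTheory.PGame :=
  ⟨⟨PEmpty, PEmpty, PEmpty.elim, PEmpty.elim⟩⟩

/-- Combinatorial games over a poset `A` of atoms: either an atomic game `[a]` for an atom
`a : A`, or a composite game `⟨L|R⟩` where `L` and `R` are nonempty families of games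
(the left and right options). -/
inductive PoGame (A : Type u) : Type (u + 1) where
  | atom : A → PoGame A
  | mk : (xl xr : Type u) → (xl → PoGame A) → (xr → PoGame A) →
      Nonempty xl → Nonempty xr → PoGame A

namespace PoGame

variable {A : Type u}

/-- `G` is an atomic game. -/
def IsAtomic : PoGame A → Prop
  | atom _ => True
  | mk _ _ _ _ _ _ => False

/-- `G` is a left option of the game given as second argument. -/
def IsLeftOption (G : PoGame A) : PoGame A → Prop
  | atom _ => False
  | mk _ _ L _ _ _ => ∃ i, L i = G

/-- `G` is a right option of the game given as second argument. -/
def IsRightOption (G : PoGame A) : PoGame A → Prop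
  | atom _ => False
  | mk _ _ _ R _ _ => ∃ j, R j = G

section Order

variable [PartialOrder A]

mutual
  /-- `Le G H` is the relation `G ≤ H` on games over the poset `A`, defined by mutual
  recursion with `Lf` (the relation `G ⊲ H`): `G ≤ H` iff every left option `G^L`
  satisfies `G^L ⊲ H`, every right option `H^R` satisfies `G ⊲ H^R`, and if `G` or `H`
  is atomic then `G ⊲ H`. -/
  inductive Le : PoGame A → PoGame A → Prop
    | intro (G H : PoGame A)
        (hL : ∀ G', IsLeftOption G' G → Lf G' H)
        (hR : ∀ H', IsRightOption H' H → Lf G H')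
        (hA : IsAtomic G ∨ IsAtomic H → Lf G H) : Le G H

  /-- `Lf G H` is the relation `G ⊲ H` on games over the poset `A`: it holds iff some
  right option `G^R` satisfies `G^R ≤ H`, or some left option `H^L` satisfies `G ≤ H^L`,
  or `G = [a]` and `H = [b]` are atomic with `a ≤ b` in `A`. -/
  inductive Lf : PoGame A → PoGame A → Prop
    | rightOption (G H G' : PoGame A) (h : IsRightOption G' G) (hle : Le G' H) : Lf G H
    | leftOption (G H H' : PoGame A) (h : IsLeftOption H' H) (hle : Le G H') : Lf G H
    | atom (a b : A) (hab : a ≤ b) : Lf (atom a) (atom b)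
end

/-- Two games are equivalent if `G ≤ H` and `H ≤ G`. -/
def GEquiv (G H : PoGame A) : Prop := Le G H ∧ Le H G

/-- `G` is locally monotone if `G ≤ G^L` for every left option `G^L` and `G^R ≤ G` for
every right option `G^R`. -/
def LocallyMonotone (G : PoGame A) : Prop :=
  (∀ G', IsLeftOption G' G → Le G G') ∧ (∀ G', IsRightOption G' G → Le G' G)

/-- `G` is an option (left or right) of `H`. -/
def IsOption (G H : PoGame A) : Prop := IsLeftOption G H ∨ IsRightOption G H

/-- `G` is a position of `H`: `H` itself, an option of `H`, an option of an option, etc. -/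
def IsPosition (G H : PoGame A) : Prop := Relation.ReflTransGen IsOption G H

/-- `G` is monotone if every position of `G` is locally monotone. -/
def Monotone (G : PoGame A) : Prop := ∀ K, IsPosition K G → LocallyMonotone K

end Order

/-- The 5-element linearly ordered set `L5 = {-3, -2, -1, 0, 1}`. -/
abbrev L5 : Type := {a : ℤ // -3 ≤ a ∧ a ≤ 1}

/-- `G` has mean `C`: an atomic game `[a]` has mean `a`, and a composite game has mean `C`
iff every left option has mean `C + 1` and every right option has mean `C - 1`. -/
def HasMean : PoGame L5 → ℤ → Prop
  | atom a, C => (a : ℤ) = C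
  | mk _ _ L R _ _, C => (∀ i, HasMean (L i) (C + 1)) ∧ (∀ j, HasMean (R j) (C - 1))

/-- The game `⟨G | H⟩` with a single left option `G` and a single right option `H`. -/
def ofPair (G H : PoGame A) : PoGame A :=
  mk PUnit PUnit (fun _ => G) (fun _ => H) ⟨PUnit.unit⟩ ⟨PUnit.unit⟩

/-- `⋆ = ⟨-1 | -3⟩`. -/
def star : PoGame L5 := ofPair (atom ⟨-1, by norm_num⟩) (atom ⟨-3, by norm_num⟩)

/-- `M(G) = ⟨1 | G⟩`. -/
def M (G : PoGame L5) : PoGame L5 := ofPair (atom ⟨1, by norm_num⟩) G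

/-- `P(G) = ⟨G | -2⟩`. -/
def P (G : PoGame L5) : PoGame L5 := ofPair G (atom ⟨-2, by norm_num⟩)

/-- `P⋆(G) = ⟨G | ⋆⟩`. -/
def Pstar (G : PoGame L5) : PoGame L5 := ofPair G star

/-- `Pn n G = P G` if `n` is odd, `P⋆ G` if `n` is even. -/
def Pn (n : ℕ) (G : PoGame L5) : PoGame L5 := if Odd n then P G else Pstar G

/-- The sequence `G_0 = [0]`, `G_{n+1} = M (Pn n (G_n))`. -/
def Gseq : ℕ → PoGame L5
  | 0 => atom ⟨0, by norm_num⟩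
  | n + 1 => M (Pn n (Gseq n))

/-- The normal-play game obtained from a game over `L5` by replacing every atom by the
normal-play game `0 = { | }`, keeping the tree of left and right options. -/
def np : PoGame L5 → SetTheory.PGame.{0}
  | atom _ => 0
  | mk xl xr L R _ _ => SetTheory.PGame.mk xl xr (fun i => np (L i)) (fun j => np (R j))

end PoGame

open PoGame in
theorem poGame_key (G : PoGame L5) : ∀ C : ℤ, HasMean G C → ∀ H : PoGame L5, ∀ D : ℤ,
    HasMean H D → (C < D → Le G H) ∧ (C ≤ D → Lf G H) := by
  induction G with
  | atom a =>
    intro C hC H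
    induction H with
    | atom b =>
      intro D hD
      have hab : ∀ h : C ≤ D, a ≤ b := by
        intro h
        have : (a : ℤ) ≤ (b : ℤ) := by
          simp only [HasMean] at hC hD; omega
        exact this
      constructor
      · intro hlt
        refine Le.intro _ _ (fun G' h => h.elim) (fun H' h => h.elim) ?_
        intro _; exact Lf.atom a b (hab hlt.le)
      · intro hle; exact Lf.atom a b (hab hle)
    | mk yl yr L R hy1 hy2 ihL ihR =>
      intro D hD
      obtain ⟨hDL, hDR⟩ := hD
      have hlf : C ≤ D → Lf (atom a) (mk yl yr L R hy1 hy2) := by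
        intro hle
        obtain ⟨i⟩ := hy1
        exact Lf.leftOption _ _ (L i) ⟨i, rfl⟩
          (((ihL i) (D + 1) (hDL i)).1 (by omega))
      refine ⟨?_, hlf⟩
      intro hlt
      refine Le.intro _ _ (fun G' h => h.elim) ?_ (fun _ => hlf hlt.le)
      rintro H' ⟨j, rfl⟩
      exact ((ihR j) (D - 1) (hDR j)).2 (by omega)
  | mk xl xr L R hx1 hx2 ihL ihR =>
    intro C hC H D hD
    obtain ⟨hCL, hCR⟩ := hC
    have hlf : C ≤ D → Lf (mk xl xr L R hx1 hx2) H := by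
      intro hle
      obtain ⟨j⟩ := hx2
      exact Lf.rightOption _ _ (R j) ⟨j, rfl⟩
        ((ihR j (C - 1) (hCR j) H D hD).1 (by omega))
    refine ⟨?_, hlf⟩
    intro hlt
    cases H with
    | atom b =>
      refine Le.intro _ _ ?_ (fun H' h => h.elim) (fun _ => hlf hlt.le)
      rintro G' ⟨i, rfl⟩
      exact (ihL i (C + 1) (hCL i) (atom b) D hD).2 (by omega)
    | mk yl yr L' R' hy1 hy2 =>
      obtain ⟨hDL, hDR⟩ := hD
      refine Le.intro _ _ ?_ ?_ (fun h => h.elim (fun h => h.elim) (fun h => h.elim))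
      · rintro G' ⟨i, rfl⟩
        exact (ihL i (C + 1) (hCL i) (mk yl yr L' R' hy1 hy2) D ⟨hDL, hDR⟩).2 (by omega)
      · rintro H' ⟨j, rfl⟩
        obtain ⟨j'⟩ := hx2
        exact Lf.rightOption _ _ (R j') ⟨j', rfl⟩
          ((ihR j' (C - 1) (hCR j') (R' j) (D - 1) (hDR j)).1 (by omega))

open PoGame in
theorem poGame_mean_option {G K : PoGame L5} {C : ℤ} (hG : HasMean G C)
    (h : IsOption K G) : ∃ D : ℤ, HasMean K D := by
  cases G with
  | atom a => exact h.elim (fun h => h.elim) (fun h => h.elim)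
  | mk xl xr L R h1 h2 =>
    obtain ⟨hL, hR⟩ := hG
    rcases h with ⟨i, rfl⟩ | ⟨j, rfl⟩
    · exact ⟨C + 1, hL i⟩
    · exact ⟨C - 1, hR j⟩

open PoGame in
/-- Every game over `L5` that has a mean is monotone. -/
theorem stmt_1 (G : PoGame L5) (C : ℤ) (hG : HasMean G C) : PoGame.Monotone G := by
  intro K hK
  have hmean : ∃ D : ℤ, HasMean K D := by
    induction hK using Relation.ReflTransGen.head_induction_on with
    | refl => exact ⟨C, hG⟩
    | head h _ ih =>
      obtain ⟨D, hD⟩ := ih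
      exact poGame_mean_option hD h
  obtain ⟨D, hD⟩ := hmean
  constructor
  · intro K' hK'
    obtain ⟨D', hD'⟩ := poGame_mean_option hD (Or.inl hK')
    -- K' is a left option, so it has mean D + 1
    cases K with
    | atom a => exact hK'.elim
    | mk xl xr L R h1 h2 =>
      obtain ⟨i, rfl⟩ := hK'
      exact (poGame_key _ D hD _ (D + 1) (hD.1 i)).1 (by omega)
  · intro K' hK'
    cases K with
    | atom a => exact hK'.elim
    | mk xl xr L R h1 h2 =>
      obtain ⟨j, rfl⟩ := hK'
      exact (poGame_key _ (D - 1) (hD.2 j) _ D hD).1 (by omega)
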